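/- Let A_0, …, A_n be real numbers with ∑_i A_i = 0, let M_0, …, M_n be strictly positive reals, let p ∈ ℝ⁴, and fix a coordinate index μ. Then the function q ↦ q_μ ∑_i A_i / ((‖q+p‖² + M_i²)(‖q‖² + M_i²)) is Lebesgue integrable on ℝ⁴ and ∫_{ℝ⁴} q_μ ∑_i A_i / ((‖q+p‖² + M_i²)(‖q‖² + M_i²)) dq = π² p_μ ∫_0^1 β ∑_i A_i log(β(1-β)‖p‖² + M_i²) dβ. -/

import Mathlib

open MeasureTheory Real Set Filter intervalIntegral
open scoped Topology

noncomputable section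

local notation "𝔼" => EuclideanSpace ℝ (Fin 4)

private lemma pv_coord_abs_le_norm (q : 𝔼) (μ : Fin 4) : |q μ| ≤ ‖q‖ := by
  rw [EuclideanSpace.norm_eq]
  rw [show |q μ| = Real.sqrt ((q μ)^2) from (Real.sqrt_sq_eq_abs _).symm]
  apply Real.sqrt_le_sqrt
  have := Finset.single_le_sum (f := fun i => ‖q i‖^2) (fun i _ => sq_nonneg _)
    (Finset.mem_univ μ)
  simpa [Real.norm_eq_abs, sq_abs] using this

private lemma pv_one_add_sq_bound {c : ℝ} (hc : 0 < c) {x : ℝ} (hx : 0 ≤ x) :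
    (1 + x)^2 ≤ (2 / min c 1) * (x^2 + c) := by
  have hm : 0 < min c 1 := lt_min hc one_pos
  have h1 : min c 1 ≤ c := min_le_left _ _
  have h2 : min c 1 ≤ 1 := min_le_right _ _
  rw [div_mul_eq_mul_div, le_div_iff₀ hm]
  have h3 : min c 1 * x^2 ≤ 1 * x^2 := mul_le_mul_of_nonneg_right h2 (sq_nonneg x)
  nlinarith [sq_nonneg (1 - x)]

private lemma pv_integrable_inv_pow (m : ℕ) (hm : 4 < m) :
    Integrable (fun x : 𝔼 => ((1 + ‖x‖)^m)⁻¹) := by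
  have h2 := integrable_one_add_norm (E := 𝔼) (μ := volume) (r := (m:ℝ))
    (by simp [finrank_euclideanSpace]; exact_mod_cast hm)
  refine h2.congr (Eventually.of_forall fun x => ?_)
  have hx : (0:ℝ) < 1 + ‖x‖ := by positivity
  show (1 + ‖x‖) ^ (-(m:ℝ)) = ((1 + ‖x‖)^m)⁻¹
  rw [Real.rpow_neg hx.le, Real.rpow_natCast]

private lemma pv_integrable_of_le {f : 𝔼 → ℝ} (hf : AEStronglyMeasurable f volume)
    (m : ℕ) (hm : 4 < m) (C : ℝ)
    (h : ∀ x, |f x| ≤ C * ((1 + ‖x‖)^m)⁻¹) : Integrable f := by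
  refine ((pv_integrable_inv_pow m hm).const_mul C).mono' hf ?_
  exact Eventually.of_forall fun x => by simpa [Real.norm_eq_abs] using h x

private lemma pv_inv_sq_diff_bound {a b c Cm : ℝ} (hc : 0 < c) (hca : c ≤ a) (hcb : c ≤ b)
    (haC : a ≤ Cm) (hbC : b ≤ Cm) {t : ℝ} (ht : 0 ≤ t) :
    |((t + a)^2)⁻¹ - ((t + b)^2)⁻¹| ≤ (2 * Cm * (c + Cm) / c) * ((t + c)^3)⁻¹ := by
  have hta : 0 < t + a := by linarith
  have htb : 0 < t + b := by linarith
  have htc : 0 < t + c := by linarith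
  have key : ((t + a)^2)⁻¹ - ((t + b)^2)⁻¹
      = ((b - a) * (2*t + a + b)) / ((t + a)^2 * (t + b)^2) := by
    field_simp
    ring
  rw [key, abs_div, abs_of_pos (by positivity : (0:ℝ) < (t + a)^2 * (t + b)^2)]
  have hnum : |(b - a) * (2*t + a + b)| ≤ Cm * (2 * (c + Cm) / c * (t + c)) := by
    rw [abs_mul]
    have h1 : |b - a| ≤ Cm := abs_le.2 ⟨by linarith, by linarith⟩
    have h2 : |2*t + a + b| = 2*t + a + b := abs_of_pos (by linarith)
    have h3 : 2*t + a + b ≤ 2 * (c + Cm) / c * (t + c) := by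
      rw [div_mul_eq_mul_div, le_div_iff₀ hc]
      nlinarith
    calc |b - a| * |2*t + a + b| ≤ Cm * (2*t + a + b) := by
          apply mul_le_mul h1 (le_of_eq h2) (abs_nonneg _) (by linarith)
      _ ≤ Cm * (2 * (c + Cm) / c * (t + c)) := by
          apply mul_le_mul_of_nonneg_left h3 (by linarith)
  have hden : (t + c)^4 ≤ (t + a)^2 * (t + b)^2 := by
    have h1 : (t + c)^2 ≤ (t + a)^2 := by nlinarith
    have h2 : (t + c)^2 ≤ (t + b)^2 := by nlinarith
    calc (t + c)^4 = (t + c)^2 * (t + c)^2 := by ring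
      _ ≤ (t + a)^2 * (t + b)^2 := by
          apply mul_le_mul h1 h2 (by positivity) (by positivity)
  have hCm : 0 < Cm := lt_of_lt_of_le hc (le_trans hca haC)
  calc |(b - a) * (2*t + a + b)| / ((t + a)^2 * (t + b)^2)
      ≤ (Cm * (2 * (c + Cm) / c * (t + c))) / ((t + c)^4) := by
        apply div_le_div₀ (mul_nonneg hCm.le (mul_nonneg (div_nonneg (by linarith) hc.le)
          (by linarith))) hnum (by positivity) hden
    _ = (2 * Cm * (c + Cm) / c) * ((t + c)^3)⁻¹ := by
        field_simp

private lemma pv_inv_cube_le {c K s u : ℝ} (hc : 0 < c) (hK0 : 0 < K) (hs : 0 ≤ s) (hu : 0 ≤ u)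
    (h : (1 + u)^2 ≤ K * (s + c)) : ((s + c)^3)⁻¹ ≤ K^3 * ((1 + u)^6)⁻¹ := by
  have hsc : 0 < s + c := by linarith
  have hu1 : (0:ℝ) < 1 + u := by linarith
  have h6 : (1 + u)^6 ≤ K^3 * (s + c)^3 := by
    have h3 := pow_le_pow_left₀ (by positivity) h 3
    calc (1 + u)^6 = ((1 + u)^2)^3 := by ring
      _ ≤ (K * (s + c))^3 := h3
      _ = K^3 * (s + c)^3 := by ring
  rw [show ((s + c)^3)⁻¹ = 1 / (s + c)^3 from (one_div _).symm,
    show K^3 * ((1 + u)^6)⁻¹ = K^3 / (1 + u)^6 from (div_eq_mul_inv _ _).symm,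
    div_le_div_iff₀ (by positivity) (by positivity)]
  linarith

private lemma pv_hasDeriv_phi {a : ℝ} (ha : 0 < a) (r : ℝ) :
    HasDerivAt (fun s : ℝ => Real.log (s^2 + a) / 2 + (a/2) * ((s^2 + a)⁻¹))
      (r^3 * ((r^2 + a)^2)⁻¹) r := by
  have hpos : 0 < r^2 + a := by positivity
  have h1 : HasDerivAt (fun s : ℝ => s^2 + a) (2*r) r := by
    simpa [mul_comm] using ((hasDerivAt_pow 2 r).add_const a)
  have h2 : HasDerivAt (fun s : ℝ => Real.log (s^2 + a)) ((r^2+a)⁻¹ * (2*r)) r := by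
    have := (Real.hasDerivAt_log hpos.ne').comp r h1; exact this
  have h3 : HasDerivAt (fun s : ℝ => (s^2 + a)⁻¹) (-(2*r) / (r^2+a)^2) r := h1.inv hpos.ne'
  have h4 := (h2.div_const 2).add (h3.const_mul (a/2))
  refine h4.congr_deriv ?_
  field_simp
  ring

private lemma pv_tendsto_aux {a : ℝ} (ha : 0 < a) :
    Tendsto (fun r : ℝ => (r^2 + a)⁻¹) atTop (𝓝 0) := by
  apply Tendsto.inv_tendsto_atTop
  apply tendsto_atTop_add_const_right
  exact tendsto_pow_atTop (by norm_num)

private lemma pv_oneD_value {a b : ℝ} (ha : 0 < a) (hb : 0 < b) :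
    ∫ r in Ioi (0:ℝ), r^3 * (((r^2 + a)^2)⁻¹ - ((r^2 + b)^2)⁻¹)
      = (Real.log b - Real.log a) / 2 ∧
    IntegrableOn (fun r : ℝ => r^3 * (((r^2 + a)^2)⁻¹ - ((r^2 + b)^2)⁻¹)) (Ioi (0:ℝ)) := by
  set c := min a b with hcdef
  set Cm := max a b with hCdef
  have hc : 0 < c := lt_min ha hb
  have hca : c ≤ a := min_le_left _ _
  have hcb : c ≤ b := min_le_right _ _
  have haC : a ≤ Cm := le_max_left _ _
  have hbC : b ≤ Cm := le_max_right _ _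
  set K := 2 / min c 1 with hKdef
  have hK : 0 < K := by
    apply div_pos two_pos (lt_min hc one_pos)
  -- integrability
  have hbound : ∀ r : ℝ, 0 ≤ r →
      |r^3 * (((r^2 + a)^2)⁻¹ - ((r^2 + b)^2)⁻¹)|
        ≤ ((2 * Cm * (c + Cm) / c) * K^3) * ((1 + r)^3)⁻¹ := by
    intro r hr
    have ht : (0:ℝ) ≤ r^2 := sq_nonneg r
    have h1 := pv_inv_sq_diff_bound hc hca hcb haC hbC ht
    have h2 := pv_inv_cube_le hc hK ht hr (pv_one_add_sq_bound hc hr)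
    have hr1 : (0:ℝ) < 1 + r := by linarith
    rw [abs_mul, abs_of_nonneg (by positivity : (0:ℝ) ≤ r^3)]
    have h3 : r^3 ≤ (1 + r)^3 := pow_le_pow_left₀ hr (by linarith) 3
    calc r^3 * |((r^2 + a)^2)⁻¹ - ((r^2 + b)^2)⁻¹|
        ≤ (1 + r)^3 * ((2 * Cm * (c + Cm) / c) * (((r^2) + c)^3)⁻¹) := by
          apply mul_le_mul h3 h1 (abs_nonneg _) (by positivity)
      _ ≤ (1 + r)^3 * ((2 * Cm * (c + Cm) / c) * (K^3 * ((1 + r)^6)⁻¹)) := by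
          apply mul_le_mul_of_nonneg_left _ (by positivity)
          apply mul_le_mul_of_nonneg_left h2 (by positivity)
      _ = ((2 * Cm * (c + Cm) / c) * K^3) * ((1 + r)^3 * ((1 + r)^6)⁻¹) := by ring
      _ = ((2 * Cm * (c + Cm) / c) * K^3) * ((1 + r)^3)⁻¹ := by
          congr 1
          have h4 : (0:ℝ) < 1 + r := hr1
          field_simp
  have hcont : Continuous (fun r : ℝ => r^3 * (((r^2 + a)^2)⁻¹ - ((r^2 + b)^2)⁻¹)) := by
    apply (continuous_pow 3).mul
    apply Continuous.sub
    · exact (((continuous_pow 2).add continuous_const).pow 2).inv₀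
        (fun r => by simp only [Pi.pow_apply, Pi.add_apply]; positivity)
    · exact (((continuous_pow 2).add continuous_const).pow 2).inv₀
        (fun r => by simp only [Pi.pow_apply, Pi.add_apply]; positivity)
  have hint3 : Integrable (fun r : ℝ => ((1 + ‖r‖)^3)⁻¹) (volume : Measure ℝ) := by
    have h2 := integrable_one_add_norm (E := ℝ) (μ := volume) (r := (3:ℝ)) (by simp)
    refine h2.congr (Eventually.of_forall fun x => ?_)
    have hx : (0:ℝ) < 1 + ‖x‖ := by positivity
    show (1 + ‖x‖) ^ (-(3:ℝ)) = ((1 + ‖x‖)^(3:ℕ))⁻¹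
    rw [Real.rpow_neg hx.le, show ((3:ℝ)) = ((3:ℕ):ℝ) by norm_num, Real.rpow_natCast]
  have hio : IntegrableOn (fun r : ℝ => r^3 * (((r^2 + a)^2)⁻¹ - ((r^2 + b)^2)⁻¹)) (Ioi (0:ℝ)) := by
    apply Integrable.mono' ((hint3.const_mul ((2 * Cm * (c + Cm) / c) * K^3)).restrict (s := Ioi 0))
      hcont.aestronglyMeasurable.restrict
    rw [ae_restrict_iff' measurableSet_Ioi]
    refine Eventually.of_forall fun r hr => ?_
    have hr0 : (0:ℝ) ≤ r := le_of_lt hr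
    rw [Real.norm_eq_abs, Real.norm_eq_abs, abs_of_nonneg hr0]
    exact hbound r hr0
  refine ⟨?_, hio⟩
  -- FTC
  set F := fun s : ℝ => (Real.log (s^2 + a) / 2 + (a/2) * ((s^2 + a)⁻¹))
      - (Real.log (s^2 + b) / 2 + (b/2) * ((s^2 + b)⁻¹)) with hFdef
  have hderiv : ∀ x ∈ Ici (0:ℝ), HasDerivAt F (x^3 * (((x^2 + a)^2)⁻¹ - ((x^2 + b)^2)⁻¹)) x := by
    intro x _
    have := (pv_hasDeriv_phi ha x).sub (pv_hasDeriv_phi hb x)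
    refine this.congr_deriv ?_
    ring
  have htends : Tendsto F atTop (𝓝 0) := by
    have l1 : Tendsto (fun r : ℝ => (a/2) * ((r^2 + a)⁻¹)) atTop (𝓝 0) := by
      simpa using (pv_tendsto_aux ha).const_mul (a/2)
    have l2 : Tendsto (fun r : ℝ => (b/2) * ((r^2 + b)⁻¹)) atTop (𝓝 0) := by
      simpa using (pv_tendsto_aux hb).const_mul (b/2)
    have l3 : Tendsto (fun r : ℝ => Real.log (r^2 + a) / 2 - Real.log (r^2 + b) / 2)
        atTop (𝓝 0) := by
      have h4 : ∀ r : ℝ, Real.log (r^2 + a) / 2 - Real.log (r^2 + b) / 2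
          = Real.log (1 + (a - b) * ((r^2 + b)⁻¹)) / 2 := by
        intro r
        have hpa : (0:ℝ) < r^2 + a := by positivity
        have hpb : (0:ℝ) < r^2 + b := by positivity
        have h5 : 1 + (a - b) * ((r^2 + b)⁻¹) = (r^2 + a) / (r^2 + b) := by
          field_simp
          ring
        rw [h5, Real.log_div hpa.ne' hpb.ne']
        ring
      simp only [h4]
      have h6 : Tendsto (fun r : ℝ => 1 + (a - b) * ((r^2 + b)⁻¹)) atTop (𝓝 1) := by
        have := ((pv_tendsto_aux hb).const_mul (a - b)).const_add 1
        simpa using this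
      have h7 : Tendsto (fun r : ℝ => Real.log (1 + (a - b) * ((r^2 + b)⁻¹))) atTop
          (𝓝 (Real.log 1)) := ((Real.continuousAt_log one_ne_zero).tendsto).comp h6
      rw [Real.log_one] at h7
      simpa using h7.div_const 2
    have := (l3.add l1).sub l2
    simp only [add_zero, sub_zero, zero_add, zero_sub, sub_self] at this ⊢
    convert this using 2 with r
    simp only [F]
    ring
  have hF0 : F 0 = (Real.log a - Real.log b) / 2 := by
    simp only [F]
    rw [show (0:ℝ)^2 + a = a by ring, show (0:ℝ)^2 + b = b by ring]
    field_simp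
    ring
  have := integral_Ioi_of_hasDerivAt_of_tendsto' hderiv hio htends
  rw [this, hF0]
  ring

private lemma pv_ball_vol : ((volume (Metric.ball (0:𝔼) 1)).toReal) = π^2 / 2 := by
  rw [EuclideanSpace.volume_ball]
  have hG : Real.Gamma ((Fintype.card (Fin 4) : ℝ) / 2 + 1) = 2 := by
    rw [show ((Fintype.card (Fin 4) : ℝ) / 2 + 1) = ((2:ℕ):ℝ) + 1 by
      norm_num [Fintype.card_fin], Real.Gamma_nat_eq_factorial]
    norm_num
  have hs : (Real.sqrt π)^(Fintype.card (Fin 4)) = π^2 := by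
    rw [Fintype.card_fin, show (Real.sqrt π)^4 = ((Real.sqrt π)^2)^2 by ring,
      Real.sq_sqrt Real.pi_nonneg]
  rw [hG, hs, ENNReal.ofReal_one, one_pow, one_mul, ENNReal.toReal_ofReal (by positivity)]

private lemma pv_fourD {a b : ℝ} (ha : 0 < a) (hb : 0 < b) :
    Integrable (fun k : 𝔼 => ((‖k‖^2 + a)^2)⁻¹ - ((‖k‖^2 + b)^2)⁻¹) ∧
    ∫ k : 𝔼, (((‖k‖^2 + a)^2)⁻¹ - ((‖k‖^2 + b)^2)⁻¹)
      = π^2 * (Real.log b - Real.log a) := by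
  set c := min a b with hcdef
  set Cm := max a b with hCdef
  have hc : 0 < c := lt_min ha hb
  set K := 2 / min c 1 with hKdef
  have hK : 0 < K := div_pos two_pos (lt_min hc one_pos)
  have hcont : Continuous (fun k : 𝔼 => ((‖k‖^2 + a)^2)⁻¹ - ((‖k‖^2 + b)^2)⁻¹) := by
    apply Continuous.sub
    · exact (((continuous_norm.pow 2).add continuous_const).pow 2).inv₀ (fun k => by simp only [Pi.pow_apply, Pi.add_apply]; positivity)
    · exact (((continuous_norm.pow 2).add continuous_const).pow 2).inv₀ (fun k => by simp only [Pi.pow_apply, Pi.add_apply]; positivity)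
  have hint : Integrable (fun k : 𝔼 => ((‖k‖^2 + a)^2)⁻¹ - ((‖k‖^2 + b)^2)⁻¹) := by
    apply pv_integrable_of_le hcont.aestronglyMeasurable 6 (by norm_num)
      ((2 * Cm * (c + Cm) / c) * K^3)
    intro k
    have ht : (0:ℝ) ≤ ‖k‖^2 := sq_nonneg _
    have h1 := pv_inv_sq_diff_bound hc (min_le_left a b) (min_le_right a b)
      (le_max_left a b) (le_max_right a b) ht
    have h2 := pv_inv_cube_le hc hK ht (norm_nonneg k) (pv_one_add_sq_bound hc (norm_nonneg k))
    calc |((‖k‖^2 + a)^2)⁻¹ - ((‖k‖^2 + b)^2)⁻¹|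
        ≤ (2 * Cm * (c + Cm) / c) * ((‖k‖^2 + c)^3)⁻¹ := h1
      _ ≤ (2 * Cm * (c + Cm) / c) * (K^3 * ((1 + ‖k‖)^6)⁻¹) := by
          apply mul_le_mul_of_nonneg_left h2 (by positivity)
      _ = ((2 * Cm * (c + Cm) / c) * K^3) * ((1 + ‖k‖)^6)⁻¹ := by ring
  refine ⟨hint, ?_⟩
  have hrad := integral_fun_norm_addHaar (volume : Measure 𝔼)
    (fun t : ℝ => ((t^2 + a)^2)⁻¹ - ((t^2 + b)^2)⁻¹)
  have hfr : Module.finrank ℝ 𝔼 = 4 := by simp [finrank_euclideanSpace]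
  rw [hfr] at hrad
  rw [hrad, measureReal_def, pv_ball_vol]
  have h1 : ∫ y in Ioi (0:ℝ), y ^ (4 - 1) • (((y^2 + a)^2)⁻¹ - ((y^2 + b)^2)⁻¹)
      = (Real.log b - Real.log a) / 2 := by
    rw [← (pv_oneD_value ha hb).1]
    apply setIntegral_congr_fun measurableSet_Ioi
    intro y _
    simp [smul_eq_mul]
  rw [h1]
  simp only [nsmul_eq_mul, smul_eq_mul]
  ring

private lemma pv_feynman {X Y : ℝ} (hX : 0 < X) (hY : 0 < Y) :
    ∫ β in (0:ℝ)..1, ((β*X + (1-β)*Y)^2)⁻¹ = (X*Y)⁻¹ := by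
  have hden : ∀ β ∈ Icc (0:ℝ) 1, 0 < β*X + (1-β)*Y := by
    intro β hβ
    rcases hβ with ⟨h0, h1⟩
    rcases lt_or_ge 0 β with hb | hb
    · have h2 : 0 ≤ (1-β)*Y := mul_nonneg (by linarith) hY.le
      nlinarith [mul_pos hb hX]
    · have hb0 : β = 0 := le_antisymm hb h0
      rw [hb0]
      ring_nf
      linarith
  by_cases hXY : X = Y
  · subst hXY
    have heq : EqOn (fun β : ℝ => ((β*X + (1-β)*X)^2)⁻¹) (fun _ : ℝ => (X*X)⁻¹)
        (uIcc (0:ℝ) 1) := by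
      intro β _
      simp only
      rw [show β*X + (1-β)*X = X by ring, sq]
    rw [intervalIntegral.integral_congr heq, intervalIntegral.integral_const]
    simp
  · set D := X - Y with hD
    have hD0 : D ≠ 0 := sub_ne_zero.2 hXY
    set H := fun β : ℝ => -((D * (β*X + (1-β)*Y))⁻¹) with hHdef
    have hderiv : ∀ β ∈ uIcc (0:ℝ) 1, HasDerivAt H (((β*X + (1-β)*Y)^2)⁻¹) β := by
      intro β hβ
      rw [uIcc_of_le zero_le_one] at hβ
      have hpos := hden β hβ
      have h1 : HasDerivAt (fun β : ℝ => β*X + (1-β)*Y) D β := by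
        have ha := (hasDerivAt_id β).mul_const X
        have hb := ((hasDerivAt_id β).const_sub 1).mul_const Y
        have hab := ha.add hb
        refine hab.congr_deriv ?_
        rw [hD]
        ring
      have h2 : HasDerivAt (fun β : ℝ => D * (β*X + (1-β)*Y)) (D * D) β := h1.const_mul D
      have h3 : D * (β*X + (1-β)*Y) ≠ 0 := mul_ne_zero hD0 hpos.ne'
      have h4 := (h2.inv h3).neg
      refine h4.congr_deriv ?_
      field_simp
    have hintg : IntervalIntegrable (fun β : ℝ => ((β*X + (1-β)*Y)^2)⁻¹) volume 0 1 := by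
      apply ContinuousOn.intervalIntegrable
      apply ContinuousOn.inv₀
      · fun_prop
      · intro β hβ
        rw [uIcc_of_le zero_le_one] at hβ
        exact pow_ne_zero _ (hden β hβ).ne'
    rw [intervalIntegral.integral_eq_sub_of_hasDerivAt hderiv hintg]
    simp only [H]
    rw [show (1:ℝ)*X + (1-1)*Y = X by ring, show (0:ℝ)*X + (1-0)*Y = Y by ring, hD]
    field_simp
    ring

private lemma pv_square (q p : 𝔼) (β : ℝ) :
    ‖q + β • p‖^2 + β*(1-β)*‖p‖^2 = β*‖q + p‖^2 + (1-β)*‖q‖^2 := by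
  have h1 := norm_add_sq_real q p
  have h2 := norm_add_sq_real q (β • p)
  have h3 : inner ℝ q (β • p) = β * (inner ℝ q p : ℝ) := real_inner_smul_right q p β
  have h6 : ‖β • p‖^2 = β^2 * ‖p‖^2 := by
    rw [norm_smul, mul_pow, Real.norm_eq_abs, sq_abs]
  rw [h2, h3, h6, h1]
  ring

private lemma pv_consts (n : ℕ) (M : Fin (n+1) → ℝ) (hM : ∀ i, 0 < M i) (p : 𝔼) :
    ∃ c Cm : ℝ, 0 < c ∧ ∀ i : Fin (n+1), ∀ β ∈ Icc (0:ℝ) 1,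
      c ≤ β*(1-β)*‖p‖^2 + M i^2 ∧ β*(1-β)*‖p‖^2 + M i^2 ≤ Cm := by
  refine ⟨Finset.univ.inf' Finset.univ_nonempty (fun i => M i^2),
    Finset.univ.sup' Finset.univ_nonempty (fun i => M i^2) + ‖p‖^2, ?_, ?_⟩
  · rw [Finset.lt_inf'_iff]
    exact fun i _ => pow_pos (hM i) 2
  · intro i β hβ
    have h0 : 0 ≤ β := hβ.1
    have h1 : β ≤ 1 := hβ.2
    have hp2 : (0:ℝ) ≤ ‖p‖^2 := sq_nonneg _
    have hb1 : 0 ≤ β*(1-β)*‖p‖^2 :=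
      mul_nonneg (mul_nonneg h0 (by linarith)) hp2
    have hb2 : β*(1-β) ≤ 1 := by nlinarith
    have hb3 : β*(1-β)*‖p‖^2 ≤ ‖p‖^2 := by nlinarith
    constructor
    · have hle : Finset.univ.inf' Finset.univ_nonempty (fun i => M i^2) ≤ M i^2 :=
        Finset.inf'_le _ (Finset.mem_univ i)
      linarith
    · have hle : M i^2 ≤ Finset.univ.sup' Finset.univ_nonempty (fun i => M i^2) :=
        Finset.le_sup' (fun i => M i^2) (Finset.mem_univ i)
      linarith

private lemma pv_T_bound (n : ℕ) (A M : Fin (n+1) → ℝ) (hM : ∀ i, 0 < M i)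
    (hA : ∑ i, A i = 0) (p : 𝔼) :
    ∃ CT : ℝ, 0 ≤ CT ∧ ∀ β ∈ Icc (0:ℝ) 1, ∀ q : 𝔼,
      |∑ i, A i * (((‖q + β • p‖^2 + (β*(1-β)*‖p‖^2 + M i^2))^2)⁻¹)|
        ≤ CT * ((1 + ‖q‖)^6)⁻¹ := by
  obtain ⟨c, Cm, hc, hbounds⟩ := pv_consts n M hM p
  have hmin : 0 < min c 1 := lt_min hc one_pos
  set K := (1+‖p‖)^2 * (2 / min c 1) with hK
  have hK0 : 0 < K := mul_pos (by positivity) (div_pos two_pos hmin)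
  refine ⟨(∑ i, |A i|) * (2*Cm*(c+Cm)/c) * K^3, ?_, ?_⟩
  · have hb0 := hbounds 0 0 (by constructor <;> norm_num)
    have hcCm : c ≤ Cm := le_trans hb0.1 hb0.2
    have h1 : 0 ≤ 2*Cm*(c+Cm)/c := div_nonneg (by nlinarith) hc.le
    exact mul_nonneg (mul_nonneg (Finset.sum_nonneg fun i _ => abs_nonneg _) h1)
      (pow_nonneg hK0.le 3)
  intro β hβ q
  have hs0 : (0:ℝ) ≤ ‖q + β • p‖^2 := sq_nonneg _
  have hq1 : (1 + ‖q‖) ≤ (1+‖p‖) * (1 + ‖q + β • p‖) := by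
    have hqe : q = (q + β • p) - β • p := by abel
    have h1 : ‖q‖ ≤ ‖q + β • p‖ + ‖β • p‖ := by
      conv_lhs => rw [hqe]
      exact norm_sub_le _ _
    have h2 : ‖β • p‖ ≤ ‖p‖ := by
      rw [norm_smul, Real.norm_eq_abs]
      have hb : |β| ≤ 1 := abs_le.2 ⟨by linarith [hβ.1], hβ.2⟩
      nlinarith [norm_nonneg p]
    nlinarith [norm_nonneg (q + β • p), norm_nonneg p]
  have hsq : (1 + ‖q‖)^2 ≤ K * (‖q + β • p‖^2 + c) := by
    have h1 := pv_one_add_sq_bound hc (norm_nonneg (q + β • p))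
    calc (1+‖q‖)^2 ≤ ((1+‖p‖) * (1 + ‖q + β • p‖))^2 :=
          pow_le_pow_left₀ (by positivity) hq1 2
      _ = (1+‖p‖)^2 * (1 + ‖q + β • p‖)^2 := by ring
      _ ≤ (1+‖p‖)^2 * ((2 / min c 1) * (‖q + β • p‖^2 + c)) :=
          mul_le_mul_of_nonneg_left h1 (by positivity)
      _ = K * (‖q + β • p‖^2 + c) := by rw [hK]; ring
  have hinv := pv_inv_cube_le hc hK0 hs0 (norm_nonneg q) hsq
  have hsum : ∑ i, A i * (((‖q + β • p‖^2 + (β*(1-β)*‖p‖^2 + M i^2))^2)⁻¹)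
      = ∑ i, A i * ((((‖q + β • p‖^2 + (β*(1-β)*‖p‖^2 + M i^2))^2)⁻¹)
          - (((‖q + β • p‖^2 + (β*(1-β)*‖p‖^2 + M 0^2))^2)⁻¹)) := by
    simp only [mul_sub, Finset.sum_sub_distrib, ← Finset.sum_mul, hA, zero_mul, sub_zero]
  rw [hsum]
  calc |∑ i, A i * ((((‖q + β • p‖^2 + (β*(1-β)*‖p‖^2 + M i^2))^2)⁻¹)
          - (((‖q + β • p‖^2 + (β*(1-β)*‖p‖^2 + M 0^2))^2)⁻¹))|
      ≤ ∑ i, |A i * ((((‖q + β • p‖^2 + (β*(1-β)*‖p‖^2 + M i^2))^2)⁻¹)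
          - (((‖q + β • p‖^2 + (β*(1-β)*‖p‖^2 + M 0^2))^2)⁻¹))| :=
        Finset.abs_sum_le_sum_abs _ _
    _ ≤ ∑ i, |A i| * ((2*Cm*(c+Cm)/c) * ((‖q + β • p‖^2 + c)^3)⁻¹) := by
        apply Finset.sum_le_sum
        intro i _
        rw [abs_mul]
        apply mul_le_mul_of_nonneg_left _ (abs_nonneg _)
        exact pv_inv_sq_diff_bound hc (hbounds i β hβ).1 (hbounds 0 β hβ).1
          (hbounds i β hβ).2 (hbounds 0 β hβ).2 hs0
    _ = (∑ i, |A i|) * ((2*Cm*(c+Cm)/c) * ((‖q + β • p‖^2 + c)^3)⁻¹) := by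
        rw [← Finset.sum_mul]
    _ ≤ (∑ i, |A i|) * ((2*Cm*(c+Cm)/c) * (K^3 * ((1+‖q‖)^6)⁻¹)) := by
        apply mul_le_mul_of_nonneg_left _ (Finset.sum_nonneg fun i _ => abs_nonneg _)
        have hb0 := hbounds 0 0 (by constructor <;> norm_num)
        have hcCm : c ≤ Cm := le_trans hb0.1 hb0.2
        have hnum : (0:ℝ) ≤ 2*Cm*(c+Cm)/c := div_nonneg (by nlinarith) hc.le
        exact mul_le_mul_of_nonneg_left hinv hnum
    _ = (∑ i, |A i|) * (2*Cm*(c+Cm)/c) * K^3 * ((1+‖q‖)^6)⁻¹ := by ring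

private lemma pv_inner (n : ℕ) (A : Fin (n+1) → ℝ) (hA : ∑ i, A i = 0)
    (Δ : Fin (n+1) → ℝ) (hΔ : ∀ i, 0 < Δ i) (v : 𝔼) :
    ∫ q : 𝔼, ∑ i, A i * (((‖q + v‖^2 + Δ i)^2)⁻¹)
      = -(π^2) * ∑ i, A i * Real.log (Δ i) := by
  have htrans : ∫ q : 𝔼, ∑ i, A i * (((‖q + v‖^2 + Δ i)^2)⁻¹)
      = ∫ k : 𝔼, ∑ i, A i * (((‖k‖^2 + Δ i)^2)⁻¹) :=
    integral_add_right_eq_self (μ := volume)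
      (fun k : 𝔼 => ∑ i, A i * (((‖k‖^2 + Δ i)^2)⁻¹)) v
  rw [htrans]
  have hptws : (fun k : 𝔼 => ∑ i, A i * (((‖k‖^2 + Δ i)^2)⁻¹))
      = fun k : 𝔼 => ∑ i, A i * ((((‖k‖^2 + Δ i)^2)⁻¹) - (((‖k‖^2 + Δ 0)^2)⁻¹)) := by
    funext k
    simp only [mul_sub, Finset.sum_sub_distrib, ← Finset.sum_mul, hA, zero_mul, sub_zero]
  rw [hptws, integral_finset_sum Finset.univ
    (fun i _ => ((pv_fourD (hΔ i) (hΔ 0)).1).const_mul (A i))]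
  have hval : ∀ i : Fin (n+1),
      ∫ k : 𝔼, A i * ((((‖k‖^2 + Δ i)^2)⁻¹) - (((‖k‖^2 + Δ 0)^2)⁻¹))
        = A i * (π^2 * (Real.log (Δ 0) - Real.log (Δ i))) := by
    intro i
    rw [MeasureTheory.integral_const_mul, (pv_fourD (hΔ i) (hΔ 0)).2]
  rw [Finset.sum_congr rfl (fun i _ => hval i)]
  have h2 : ∑ i, A i * (π^2 * (Real.log (Δ 0) - Real.log (Δ i)))
      = (∑ i, A i) * (π^2 * Real.log (Δ 0)) - π^2 * ∑ i, A i * Real.log (Δ i) := by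
    rw [Finset.sum_mul, Finset.mul_sum, ← Finset.sum_sub_distrib]
    exact Finset.sum_congr rfl fun i _ => by ring
  rw [h2, hA]
  ring

private lemma pv_S_eq (n : ℕ) (A M : Fin (n+1) → ℝ) (hM : ∀ i, 0 < M i) (p q : 𝔼) :
    ∑ i, A i / ((‖q + p‖^2 + M i^2) * (‖q‖^2 + M i^2))
      = ∫ β in (0:ℝ)..1, ∑ i, A i * (((‖q + β • p‖^2 + (β*(1-β)*‖p‖^2 + M i^2))^2)⁻¹) := by
  have hX : ∀ i : Fin (n+1), 0 < ‖q + p‖^2 + M i^2 :=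
    fun i => add_pos_of_nonneg_of_pos (sq_nonneg _) (pow_pos (hM i) 2)
  have hY : ∀ i : Fin (n+1), 0 < ‖q‖^2 + M i^2 :=
    fun i => add_pos_of_nonneg_of_pos (sq_nonneg _) (pow_pos (hM i) 2)
  have hrw : EqOn
      (fun β : ℝ => ∑ i, A i * (((‖q + β • p‖^2 + (β*(1-β)*‖p‖^2 + M i^2))^2)⁻¹))
      (fun β : ℝ => ∑ i, A i * (((β*(‖q + p‖^2 + M i^2) + (1-β)*(‖q‖^2 + M i^2))^2)⁻¹))
      (uIcc (0:ℝ) 1) := by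
    intro β _
    apply Finset.sum_congr rfl
    intro i _
    have h := pv_square q p β
    rw [show ‖q + β • p‖^2 + (β*(1-β)*‖p‖^2 + M i^2)
        = β*(‖q + p‖^2 + M i^2) + (1-β)*(‖q‖^2 + M i^2) from by linear_combination h]
  have hii : ∀ i : Fin (n+1), IntervalIntegrable
      (fun β : ℝ => A i * (((β*(‖q + p‖^2 + M i^2) + (1-β)*(‖q‖^2 + M i^2))^2)⁻¹))
      volume 0 1 := by
    intro i
    apply ContinuousOn.intervalIntegrable
    apply ContinuousOn.mul continuousOn_const
    apply ContinuousOn.inv₀ (by fun_prop)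
    intro β hβ
    rw [uIcc_of_le zero_le_one] at hβ
    have hpos : 0 < β*(‖q + p‖^2 + M i^2) + (1-β)*(‖q‖^2 + M i^2) := by
      rcases lt_or_ge 0 β with hb | hb
      · have h2 : 0 ≤ (1-β)*(‖q‖^2 + M i^2) := mul_nonneg (by linarith [hβ.2]) (hY i).le
        nlinarith [mul_pos hb (hX i)]
      · have hb0 : β = 0 := le_antisymm hb hβ.1
        rw [hb0]
        ring_nf
        nlinarith [hY i]
    exact pow_ne_zero _ hpos.ne'
  rw [intervalIntegral.integral_congr hrw,
    intervalIntegral.integral_finset_sum (fun i _ => hii i)]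
  refine Finset.sum_congr rfl fun i _ => ?_
  rw [intervalIntegral.integral_const_mul, pv_feynman (hX i) (hY i), div_eq_mul_inv]

/-- Identity (int-q3): the two-propagator Pauli–Villars integral with one
momentum factor, in Feynman parametrization. -/
theorem integral_pauliVillars_two_propagators_coord (n : ℕ) (A M : Fin (n + 1) → ℝ)
    (hM : ∀ i, 0 < M i) (hA : ∑ i, A i = 0) (p : EuclideanSpace ℝ (Fin 4))
    (μ : Fin 4) :
    Integrable (fun q : EuclideanSpace ℝ (Fin 4) =>
      q μ * ∑ i, A i / ((‖q + p‖ ^ 2 + M i ^ 2) * (‖q‖ ^ 2 + M i ^ 2))) ∧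
    ∫ q : EuclideanSpace ℝ (Fin 4),
        q μ * ∑ i, A i / ((‖q + p‖ ^ 2 + M i ^ 2) * (‖q‖ ^ 2 + M i ^ 2)) =
      π ^ 2 * p μ * ∫ β in (0 : ℝ)..1,
        β * ∑ i, A i * Real.log (β * (1 - β) * ‖p‖ ^ 2 + M i ^ 2) := by
  let S : 𝔼 → ℝ := fun q => ∑ i, A i / ((‖q + p‖ ^ 2 + M i ^ 2) * (‖q‖ ^ 2 + M i ^ 2))
  let T : ℝ → 𝔼 → ℝ := fun β q =>
    ∑ i, A i * (((‖q + β • p‖^2 + (β*(1-β)*‖p‖^2 + M i^2))^2)⁻¹)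
  let L : ℝ → ℝ := fun β => ∑ i, A i * Real.log (β*(1-β)*‖p‖^2 + M i^2)
  have hX : ∀ (q : 𝔼) (i : Fin (n+1)), 0 < ‖q + p‖^2 + M i^2 :=
    fun q i => add_pos_of_nonneg_of_pos (sq_nonneg _) (pow_pos (hM i) 2)
  have hY : ∀ (q : 𝔼) (i : Fin (n+1)), 0 < ‖q‖^2 + M i^2 :=
    fun q i => add_pos_of_nonneg_of_pos (sq_nonneg _) (pow_pos (hM i) 2)
  have hSeq : ∀ q : 𝔼, S q = ∫ β in (0:ℝ)..1, T β q := fun q => pv_S_eq n A M hM p q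
  obtain ⟨CT, hCT0, hCT⟩ := pv_T_bound n A M hM hA p
  have hSbound : ∀ q : 𝔼, |S q| ≤ CT * ((1 + ‖q‖)^6)⁻¹ := by
    intro q
    rw [hSeq q]
    have hb : ∀ β ∈ Set.uIoc (0:ℝ) 1, ‖T β q‖ ≤ CT * ((1 + ‖q‖)^6)⁻¹ := by
      intro β hβ
      rw [uIoc_of_le zero_le_one] at hβ
      simpa [Real.norm_eq_abs] using hCT β (Ioc_subset_Icc_self hβ) q
    have := intervalIntegral.norm_integral_le_of_norm_le_const hb
    simpa [Real.norm_eq_abs] using this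
  have hScont : Continuous S := by
    apply continuous_finset_sum
    intro i _
    apply Continuous.div continuous_const
    · fun_prop
    · intro q
      exact (mul_pos (hX q i) (hY q i)).ne'
  have hSint : Integrable S :=
    pv_integrable_of_le hScont.aestronglyMeasurable 6 (by norm_num) CT hSbound
  have hFbound : ∀ q : 𝔼, |q μ * S q| ≤ CT * ((1 + ‖q‖)^5)⁻¹ := by
    intro q
    rw [abs_mul]
    have h1 : |q μ| ≤ 1 + ‖q‖ :=
      le_trans (pv_coord_abs_le_norm q μ) (by linarith [norm_nonneg q])
    have h3 : (0:ℝ) < 1 + ‖q‖ := by positivity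
    calc |q μ| * |S q| ≤ (1 + ‖q‖) * (CT * ((1 + ‖q‖)^6)⁻¹) :=
        mul_le_mul h1 (hSbound q) (abs_nonneg _) h3.le
      _ = CT * ((1 + ‖q‖) * ((1 + ‖q‖)^6)⁻¹) := by ring
      _ = CT * ((1 + ‖q‖)^5)⁻¹ := by
          congr 1
          field_simp
  have hcoordcont : Continuous (fun q : 𝔼 => q μ) := by fun_prop
  have hFcont : Continuous (fun q : 𝔼 => q μ * S q) := hcoordcont.mul hScont
  have hFint : Integrable (fun q : 𝔼 => q μ * S q) :=
    pv_integrable_of_le hFcont.aestronglyMeasurable 5 (by norm_num) CT hFbound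
  refine ⟨hFint, ?_⟩
  -- Fubini for the scalar integral
  set ν := (volume : Measure ℝ).restrict (Ioc (0:ℝ) 1) with hν
  haveI hνfin : IsFiniteMeasure ν := by
    constructor
    rw [hν, Measure.restrict_apply_univ, Real.volume_Ioc]
    simp
  have hνuniv : (ν univ).toReal = 1 := by
    rw [hν, Measure.restrict_apply_univ, Real.volume_Ioc]
    norm_num
  have hTmeas : Measurable (fun z : 𝔼 × ℝ => T z.2 z.1) := by
    apply Finset.measurable_sum
    intro i _
    apply Measurable.const_mul
    apply Measurable.inv
    have hcm : Continuous (fun z : 𝔼 × ℝ =>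
        (‖z.1 + z.2 • p‖^2 + (z.2*(1-z.2)*‖p‖^2 + M i^2))^2) := by fun_prop
    exact hcm.measurable
  have hTasm : AEStronglyMeasurable (Function.uncurry fun (q : 𝔼) (β : ℝ) => T β q)
      ((volume : Measure 𝔼).prod ν) := by
    exact (hTmeas.aestronglyMeasurable :)
  have hprod : Integrable (Function.uncurry fun (q : 𝔼) (β : ℝ) => T β q)
      ((volume : Measure 𝔼).prod ν) := by
    rw [integrable_prod_iff hTasm]
    constructor
    · refine Eventually.of_forall fun q => ?_
      have hconst : Integrable (fun _ : ℝ => CT * ((1 + ‖q‖)^6)⁻¹) ν := integrable_const _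
      apply hconst.mono'
      · exact (hTmeas.comp (measurable_const.prodMk measurable_id)).aestronglyMeasurable
      · rw [hν, ae_restrict_iff' measurableSet_Ioc]
        refine Eventually.of_forall fun β hβ => ?_
        simpa [Real.norm_eq_abs] using hCT β (Ioc_subset_Icc_self hβ) q
    · apply pv_integrable_of_le ?_ 6 (by norm_num) CT
      · intro q
        show |∫ β, ‖T β q‖ ∂ν| ≤ CT * ((1 + ‖q‖)^6)⁻¹
        have hnn : 0 ≤ ∫ β, ‖T β q‖ ∂ν := integral_nonneg fun β => norm_nonneg _
        rw [abs_of_nonneg hnn]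
        have hb : ∀ᵐ β ∂ν, ‖‖T β q‖‖ ≤ CT * ((1 + ‖q‖)^6)⁻¹ := by
          rw [hν, ae_restrict_iff' measurableSet_Ioc]
          refine Eventually.of_forall fun β hβ => ?_
          simpa [Real.norm_eq_abs, abs_abs] using hCT β (Ioc_subset_Icc_self hβ) q
        have := norm_integral_le_of_norm_le_const hb
        rw [measureReal_def, hνuniv, mul_one] at this
        calc ∫ β, ‖T β q‖ ∂ν ≤ ‖∫ β, ‖T β q‖ ∂ν‖ := le_abs_self _
          _ ≤ CT * ((1 + ‖q‖)^6)⁻¹ := this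
      · exact (hTasm.norm.integral_prod_right' :)
  have hswap := integral_integral_swap hprod
  have hL : ∫ q : 𝔼, ∫ β, T β q ∂ν = ∫ q : 𝔼, S q := by
    refine integral_congr_ae (Eventually.of_forall fun q => ?_)
    rw [hSeq q, intervalIntegral.integral_of_le zero_le_one, hν]
  have hR : ∫ β, (∫ q : 𝔼, T β q) ∂ν
      = ∫ β in (0:ℝ)..1, (-(π^2) * L β) := by
    rw [intervalIntegral.integral_of_le zero_le_one, hν]
    apply setIntegral_congr_fun measurableSet_Ioc
    intro β hβ
    have hβ' := Ioc_subset_Icc_self hβ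
    have hΔ : ∀ i : Fin (n+1), 0 < β*(1-β)*‖p‖^2 + M i^2 := fun i =>
      add_pos_of_nonneg_of_pos (mul_nonneg (mul_nonneg hβ'.1 (by linarith [hβ'.2]))
        (sq_nonneg _)) (pow_pos (hM i) 2)
    exact pv_inner n A hA (fun i => β*(1-β)*‖p‖^2 + M i^2) hΔ (β • p)
  have hIval : ∫ q : 𝔼, S q = -(π^2) * ∫ β in (0:ℝ)..1, L β := by
    rw [← hL, hswap, hR, intervalIntegral.integral_const_mul]
  -- symmetry q ↦ -(q+p)
  have hSymS : ∀ q : 𝔼, S (-(q + p)) = S q := by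
    intro q
    apply Finset.sum_congr rfl
    intro i _
    have h1 : ‖-(q+p) + p‖ = ‖q‖ := by
      rw [show -(q+p) + p = -q by abel, norm_neg]
    have h2 : ‖(-(q+p) : 𝔼)‖ = ‖q + p‖ := norm_neg _
    rw [h1, h2, mul_comm]
  have hcoord : ∀ q : 𝔼, (-(q + p) : 𝔼) μ = -(q μ + p μ) := by
    intro q
    simp [EuclideanSpace]
  have hneg : ∫ q : 𝔼, q μ * S q = ∫ q : 𝔼, (-(q + p) : 𝔼) μ * S (-(q + p)) := by
    have e2 : ∫ q : 𝔼, (-q : 𝔼) μ * S (-q) = ∫ q : 𝔼, q μ * S q :=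
      integral_neg_eq_self (fun q : 𝔼 => q μ * S q) volume
    have e1 : ∫ q : 𝔼, (-(q + p) : 𝔼) μ * S (-(q + p)) = ∫ q : 𝔼, (-q : 𝔼) μ * S (-q) :=
      integral_add_right_eq_self (fun q : 𝔼 => (-q : 𝔼) μ * S (-q)) p
    rw [e1, e2]
  have hsplit : ∫ q : 𝔼, (-(q + p) : 𝔼) μ * S (-(q + p))
      = ∫ q : 𝔼, (-(q μ * S q) + (-(p μ)) * S q) := by
    refine integral_congr_ae (Eventually.of_forall fun q => ?_)
    show (-(q + p) : 𝔼) μ * S (-(q + p)) = -(q μ * S q) + (-(p μ)) * S q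
    rw [hSymS q, hcoord q]
    ring
  have hsplit2 : ∫ q : 𝔼, (-(q μ * S q) + (-(p μ)) * S q)
      = (-∫ q : 𝔼, q μ * S q) + (-(p μ)) * ∫ q : 𝔼, S q := by
    have hN : Integrable (fun q : 𝔼 => -(q μ * S q)) := hFint.neg
    have hC : Integrable (fun q : 𝔼 => (-(p μ)) * S q) := hSint.const_mul _
    rw [integral_add hN hC, MeasureTheory.integral_neg, MeasureTheory.integral_const_mul]
  have hhalf : ∫ q : 𝔼, q μ * S q = -(p μ/2) * ∫ q : 𝔼, S q := by
    have h := hneg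
    rw [hsplit, hsplit2] at h
    linear_combination h / 2
  -- beta symmetry
  have hLcontOn : ContinuousOn L (uIcc (0:ℝ) 1) := by
    apply continuousOn_finset_sum
    intro i _
    apply ContinuousOn.mul continuousOn_const
    apply ContinuousOn.log (by fun_prop)
    intro β hβ
    rw [uIcc_of_le zero_le_one] at hβ
    exact (add_pos_of_nonneg_of_pos (mul_nonneg (mul_nonneg hβ.1 (by linarith [hβ.2]))
      (sq_nonneg _)) (pow_pos (hM i) 2)).ne'
  have hLint : IntervalIntegrable L volume 0 1 := hLcontOn.intervalIntegrable
  have hβLint : IntervalIntegrable (fun β => β * L β) volume 0 1 :=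
    (continuousOn_id.mul hLcontOn).intervalIntegrable
  have hLsym : ∀ β : ℝ, L (1 - β) = L β := by
    intro β
    apply Finset.sum_congr rfl
    intro i _
    rw [show (1-β)*(1-(1-β))*‖p‖^2 + M i^2 = β*(1-β)*‖p‖^2 + M i^2 by ring]
  have hhalfβ : ∫ β in (0:ℝ)..1, β * L β = (∫ β in (0:ℝ)..1, L β) / 2 := by
    have h1 : ∫ β in (0:ℝ)..1, (1-β) * L (1-β) = ∫ β in (0:ℝ)..1, β * L β := by
      have := intervalIntegral.integral_comp_sub_left (a := (0:ℝ)) (b := 1)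
        (fun β => β * L β) 1
      simpa using this
    have h2 : ∫ β in (0:ℝ)..1, (1-β) * L (1-β) = ∫ β in (0:ℝ)..1, (1-β) * L β := by
      apply intervalIntegral.integral_congr
      intro β _
      show (1-β) * L (1-β) = (1-β) * L β
      rw [hLsym]
    have h3 : ∫ β in (0:ℝ)..1, (1-β) * L β
        = (∫ β in (0:ℝ)..1, L β) - ∫ β in (0:ℝ)..1, β * L β := by
      rw [← intervalIntegral.integral_sub hLint hβLint]
      exact intervalIntegral.integral_congr fun β _ => by ring
    linarith [h1, h2, h3]
  show ∫ q : 𝔼, q μ * S q = π ^ 2 * p μ * ∫ β in (0:ℝ)..1, β * L β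
  rw [hhalf, hIval, hhalfβ]
  ring

end
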